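/- Let z_1, ..., z_L ∈ ℂ^D, w_1, ..., w_L ∈ ℝ, and p_1, ..., p_K ∈ ℂ^D. Define q_k = vec(p_k p_k†) ∈ ℂ^{D²}, let Q be the D² × K complex matrix whose k-th column is q_k, set Ĉ = Σ_{ℓ=1}^L w_ℓ z_ℓ z_ℓ† and v̂ ∈ ℝ^K with entries v̂_k = Σ_{ℓ=1}^L w_ℓ |p_k† z_ℓ|². If the D² × D² matrix Q·Q† is invertible, then (Q·Q†)^{-1} · Q · v̂ = vec(Ĉ); that is, the MuChaPro least-squares reconstruction from the linearly despeckled projections coincides with the linear multi-channel estimator. -/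

import Mathlib

open Finset ComplexConjugate Matrix

/-- With `q_k = vec(p_k p_k†)` the columns of the `D² × K` matrix `Q`
(indexed here by `Fin D × Fin D`, a fixed ordering of the `D²` entries),
`Ĉ = Σ_ℓ w_ℓ z_ℓ z_ℓ†` the linear multi-channel estimator, and
`v̂_k = Σ_ℓ w_ℓ |p_k† z_ℓ|²` the linear single-channel estimates, if `Q·Q†` is
invertible then the MuChaPro reconstruction `(Q·Q†)⁻¹ · Q · v̂` equals `vec(Ĉ)`. -/
theorem muchapro_reconstruction_eq_linear_estimator (D K L : ℕ)
    (z : Fin L → Fin D → ℂ) (w : Fin L → ℝ) (p : Fin K → Fin D → ℂ)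
    (Q : Matrix (Fin D × Fin D) (Fin K) ℂ)
    (hQ : ∀ a b k, Q (a, b) k = p k a * conj (p k b))
    (Chat : Matrix (Fin D) (Fin D) ℂ)
    (hChat : Chat = ∑ ℓ, (w ℓ : ℂ) • Matrix.vecMulVec (z ℓ) (star (z ℓ)))
    (vhat : Fin K → ℝ)
    (hvhat : ∀ k, vhat k = ∑ ℓ, w ℓ * ‖∑ a, conj (p k a) * z ℓ a‖ ^ 2)
    (hinv : IsUnit (Q * Qᴴ)) :
    (Q * Qᴴ)⁻¹ *ᵥ (Q *ᵥ fun k => (vhat k : ℂ)) = fun ab => Chat ab.1 ab.2 := by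
  have key : (fun k => (vhat k : ℂ)) = Qᴴ *ᵥ (fun ab => Chat ab.1 ab.2) := by
    funext k
    have habs : ∀ ℓ, ((‖∑ a, conj (p k a) * z ℓ a‖ ^ 2 : ℝ) : ℂ)
        = (∑ a, conj (p k a) * z ℓ a) * conj (∑ a, conj (p k a) * z ℓ a) := by
      intro ℓ
      rw [Complex.sq_norm, Complex.mul_conj]
    simp only [hvhat, hChat, mulVec, dotProduct, conjTranspose_apply, hQ,
      Matrix.sum_apply, Matrix.smul_apply, vecMulVec_apply, Pi.star_apply,
      Complex.ofReal_sum, Complex.ofReal_mul, habs, map_sum, _root_.map_mul,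
      RingHom.id_apply, Complex.conj_conj, Complex.star_def, Fintype.sum_prod_type,
      Finset.sum_mul_sum, Finset.mul_sum, Finset.sum_mul, smul_eq_mul]
    have hcomm : ∀ (F : Fin D → Fin D → Fin L → ℂ),
        ∑ a, ∑ b, ∑ ℓ, F a b ℓ = ∑ ℓ, ∑ a, ∑ b, F a b ℓ := by
      intro F
      calc ∑ a, ∑ b, ∑ ℓ, F a b ℓ
          = ∑ a, ∑ ℓ, ∑ b, F a b ℓ :=
            Finset.sum_congr rfl fun a _ => Finset.sum_comm
        _ = ∑ ℓ, ∑ a, ∑ b, F a b ℓ := Finset.sum_comm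
    conv_rhs => rw [hcomm]
    refine Finset.sum_congr rfl fun ℓ _ => ?_
    rw [Finset.sum_comm]
    refine Finset.sum_congr rfl fun a _ => ?_
    refine Finset.sum_congr rfl fun b _ => ?_
    ring
  rw [key, mulVec_mulVec, mulVec_mulVec, Matrix.mul_assoc,
    Matrix.nonsing_inv_mul _ ((Matrix.isUnit_iff_isUnit_det _).mp hinv), one_mulVec]
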